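/- Let k be an algebraically closed field of characteristic p > 0 and let ζ = ∑_{i≥1} x^{1 - 1/p^i}, an element of the Hahn series field k[[x^Q]] with exponents in the rationals. Then ζ satisfies the Artin–Schreier equation ζ^p - x^{p-1}(1 + ζ) = 0. -/

import Mathlib

open HahnSeries Finset
open scoped Classical

section Aux

variable {k : Type*} [Field k] (p : ℕ) [hp : Fact p.Prime] [CharP k p]

/-- The exponents of ζ. -/
noncomputable abbrev asExp (p : ℕ) (i : ℕ) : ℚ := 1 - (1 : ℚ) / (p : ℚ) ^ (i + 1)

lemma asExp_strictMono (hp1 : 1 < p) : StrictMono (asExp p) := by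
  intro i j hij
  have hp1' : (1:ℚ) < (p:ℚ) := by exact_mod_cast hp1
  have h0 : (0:ℚ) < (p:ℚ) := by positivity
  have : (1:ℚ)/(p:ℚ)^(j+1) < 1/(p:ℚ)^(i+1) := by
    apply div_lt_div_of_pos_left one_pos (by positivity)
    exact pow_lt_pow_right₀ hp1' (by omega)
  simp only [asExp]
  linarith

lemma asExp_lt_one (hp1 : 1 < p) (i : ℕ) : asExp p i < 1 := by
  have hp1' : (1:ℚ) < (p:ℚ) := by exact_mod_cast hp1
  have : (0:ℚ) < (1:ℚ)/(p:ℚ)^(i+1) := by positivity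
  simp only [asExp]; linarith

/-- Partial sums of ζ. -/
noncomputable def partS (p : ℕ) (n : ℕ) : HahnSeries ℚ k :=
  ∑ i ∈ Finset.range n, HahnSeries.single (asExp p i) (1 : k)

lemma partS_coeff (n : ℕ) (q : ℚ) :
    (partS (k := k) p n).coeff q = if ∃ i < n, q = asExp p i then 1 else 0 := by
  have : (partS (k := k) p n).coeff q
      = ∑ i ∈ Finset.range n, (HahnSeries.single (asExp p i) (1 : k)).coeff q := by
    exact map_sum (HahnSeries.coeff.addMonoidHom q) _ _
  rw [this]
  by_cases h : ∃ i < n, q = asExp p i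
  · obtain ⟨i, hi, rfl⟩ := h
    rw [Finset.sum_eq_single i]
    · rw [HahnSeries.coeff_single_same, if_pos ⟨i, hi, rfl⟩]
    · intro j hj hji
      apply HahnSeries.coeff_single_of_ne
      exact fun hc => hji ((asExp_strictMono p hp.out.one_lt).injective hc.symm)
    · intro h; exact absurd (Finset.mem_range.2 hi) h
  · rw [if_neg h]
    apply Finset.sum_eq_zero
    intro i hi
    apply HahnSeries.coeff_single_of_ne
    exact fun hc => h ⟨i, Finset.mem_range.1 hi, hc⟩

/-- Support bound for powers. -/
lemma pow_support_bound {f : HahnSeries ℚ k} {a b : ℚ}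
    (hf : ∀ s : ℚ, f.coeff s ≠ 0 → a ≤ s ∧ s < b) :
    ∀ m : ℕ, 1 ≤ m → ∀ s : ℚ, (f ^ m).coeff s ≠ 0 → m * a ≤ s ∧ s < m * b := by
  intro m hm
  induction m, hm using Nat.le_induction with
  | base => intro s hs; simpa using hf s (by simpa using hs)
  | succ m hm ih =>
    intro s hs
    have hmem : s ∈ (f ^ m * f).support := by
      rw [← pow_succ]; exact hs
    obtain ⟨i, hi, j, hj, rfl⟩ := HahnSeries.support_mul_subset hmem
    obtain ⟨hi1, hi2⟩ := ih i hi
    obtain ⟨hj1, hj2⟩ := hf j hj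
    constructor
    · push_cast; nlinarith
    · push_cast; nlinarith

end Aux

/-- Let `k` be an algebraically closed field of characteristic `p > 0` and let
`ζ = ∑_{i ≥ 1} x^{1 - 1/pⁱ}` in the Hahn series field `k[[x^ℚ]]` (the Hahn series
with coefficient `1` at each exponent `1 - 1/pⁱ`, `i ≥ 1`, and `0` elsewhere).
Then `ζ` satisfies the Artin–Schreier equation `ζ^p - x^{p-1} (1 + ζ) = 0`. -/
theorem artinSchreier_hahnSeries_root
    {k : Type*} [Field k] [IsAlgClosed k] (p : ℕ) [hp : Fact p.Prime] [CharP k p]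
    (ζ : HahnSeries ℚ k)
    (hζ1 : ∀ q : ℚ, (∃ i : ℕ, q = 1 - (1 : ℚ) / (p : ℚ) ^ (i + 1)) → ζ.coeff q = 1)
    (hζ0 : ∀ q : ℚ, (¬ ∃ i : ℕ, q = 1 - (1 : ℚ) / (p : ℚ) ^ (i + 1)) → ζ.coeff q = 0) :
    ζ ^ p - HahnSeries.single ((p : ℚ) - 1) (1 : k) * (1 + ζ) = 0 := by
  haveI : CharP (HahnSeries ℚ k) p :=
    charP_of_injective_ringHom (HahnSeries.C_injective (Γ := ℚ) (R := k)) p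
  have hp1 : 1 < p := hp.out.one_lt
  have hp1' : (1:ℚ) < (p:ℚ) := by exact_mod_cast hp1
  set r : ℕ → HahnSeries ℚ k := fun n => ζ - partS (k := k) p n with hr
  -- coefficients of the tails
  have rcoeff : ∀ n q, (r n).coeff q = if ∃ i, n ≤ i ∧ q = asExp p i then 1 else 0 := by
    intro n q
    rw [hr]
    simp only [HahnSeries.coeff_sub, Pi.sub_apply, partS_coeff]
    by_cases h : ∃ i, q = asExp p i
    · obtain ⟨i, rfl⟩ := h
      rw [hζ1 _ ⟨i, rfl⟩]
      have hinj := (asExp_strictMono p hp1).injective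
      by_cases hi : n ≤ i
      · have h1 : ¬ ∃ j, j < n ∧ asExp p i = asExp p j := by
          rintro ⟨j, hj, hji⟩; have := hinj hji; omega
        rw [if_neg h1, if_pos ⟨i, hi, rfl⟩, sub_zero]
      · have h2 : ¬ ∃ j, n ≤ j ∧ asExp p i = asExp p j := by
          rintro ⟨j, hj, hji⟩; have := hinj hji; omega
        rw [if_pos ⟨i, by omega, rfl⟩, if_neg h2, sub_self]
    · rw [hζ0 _ h, if_neg, if_neg, sub_zero]
      · rintro ⟨i, _, hi⟩; exact h ⟨i, hi⟩
      · rintro ⟨i, _, hi⟩; exact h ⟨i, hi⟩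
  -- support bound for the tails
  have rbound : ∀ n s, (r n).coeff s ≠ 0 → asExp p n ≤ s ∧ s < 1 := by
    intro n s hs
    rw [rcoeff] at hs
    by_cases h : ∃ i, n ≤ i ∧ s = asExp p i
    · obtain ⟨i, hi, rfl⟩ := h
      exact ⟨(asExp_strictMono p hp1).monotone hi, asExp_lt_one p hp1 i⟩
    · simp [h] at hs
  -- the key identity for partial sums
  have Spow : ∀ n : ℕ, (partS (k := k) p (n+1)) ^ p
      = HahnSeries.single ((p : ℚ) - 1) (1 : k) * (1 + partS (k := k) p n) := by
    intro n
    rw [partS, sum_pow_char]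
    have hterm : ∀ i : ℕ, (HahnSeries.single (asExp p i) (1 : k)) ^ p
        = HahnSeries.single ((p : ℚ) - (1:ℚ)/(p:ℚ)^i) (1 : k) := by
      intro i
      rw [HahnSeries.single_pow, one_pow]
      congr 1
      have hp0 : (p:ℚ) ≠ 0 := by positivity
      have key : (p:ℚ) * ((1:ℚ)/(p:ℚ)^(i+1)) = 1/(p:ℚ)^i := by
        rw [pow_succ']
        field_simp
      simp only [asExp, nsmul_eq_mul]
      rw [mul_sub, mul_one, key]
    simp only [hterm]
    rw [Finset.sum_range_succ']
    rw [mul_add, mul_one, partS, Finset.mul_sum]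
    have hsingle : ∀ i : ℕ, HahnSeries.single ((p : ℚ) - 1) (1 : k) *
        HahnSeries.single (asExp p i) (1 : k)
        = HahnSeries.single ((p : ℚ) - (1:ℚ)/(p:ℚ)^(i+1)) (1 : k) := by
      intro i
      rw [HahnSeries.single_mul_single, one_mul]
      congr 1
      simp only [asExp]; ring
    simp only [hsingle, pow_zero]
    rw [add_comm]
    norm_num
  -- decomposition of the equation
  have hdec : ∀ n : ℕ, ζ ^ p - HahnSeries.single ((p : ℚ) - 1) (1 : k) * (1 + ζ)
      = (r (n+1)) ^ p - HahnSeries.single ((p : ℚ) - 1) (1 : k) * (r n) := by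
    intro n
    have h1 : ζ = partS (k := k) p (n+1) + r (n+1) := by rw [hr]; ring
    have h2 : ζ ^ p = (partS (k := k) p (n+1)) ^ p + (r (n+1)) ^ p := by
      conv_lhs => rw [h1]
      exact add_pow_char _ _ _
    rw [h2, Spow n]
    have h3 : ζ = partS (k := k) p n + r n := by rw [hr]; ring
    conv_lhs => rw [h3]
    ring
  -- conclude coefficientwise
  ext q
  rw [HahnSeries.coeff_zero]
  -- choose n suitable for q
  obtain ⟨n, hn⟩ : ∃ n : ℕ, ¬ ((p:ℚ) - (1:ℚ)/(p:ℚ)^(n+1) ≤ q ∧ q < p) := by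
    by_cases hq : (p:ℚ) ≤ q
    · exact ⟨0, fun h => absurd h.2 (not_lt.2 hq)⟩
    · push_neg at hq
      obtain ⟨n, hn⟩ := pow_unbounded_of_one_lt (1/((p:ℚ) - q)) hp1'
      refine ⟨n, fun h => ?_⟩
      have hpq : (0:ℚ) < (p:ℚ) - q := by linarith
      have h1 : (1:ℚ)/((p:ℚ)-q) < (p:ℚ)^(n+1) :=
        lt_of_lt_of_le hn (pow_le_pow_right₀ (le_of_lt hp1') (by omega))
      have h2 : (1:ℚ)/(p:ℚ)^(n+1) < (p:ℚ) - q := by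
        rw [div_lt_iff₀ (by positivity)]
        rw [div_lt_iff₀ hpq] at h1
        linarith [mul_comm ((p:ℚ)-q) ((p:ℚ)^(n+1))]
      linarith [h.1]
  rw [hdec n, HahnSeries.coeff_sub]
  have hA : ((r (n+1)) ^ p).coeff q = 0 := by
    by_contra hA
    obtain ⟨h1, h2⟩ := pow_support_bound (rbound (n+1)) p (by omega) q hA
    apply hn
    constructor
    · refine le_trans (le_of_eq ?_) h1
      simp only [asExp]
      field_simp
      ring
    · simpa using h2
  have hB : (HahnSeries.single ((p : ℚ) - 1) (1 : k) * (r n)).coeff q = 0 := by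
    have hq : q = (q - ((p:ℚ)-1)) + ((p:ℚ)-1) := by ring
    rw [hq, HahnSeries.coeff_single_mul_add, one_mul]
    rw [rcoeff]
    rw [if_neg]
    rintro ⟨i, hi, hqi⟩
    apply hn
    have hqv : q = (p:ℚ) - (1:ℚ)/(p:ℚ)^(i+1) := by
      have := hqi
      simp only [asExp] at this
      linarith [this]
    constructor
    · rw [hqv]
      have : (1:ℚ)/(p:ℚ)^(i+1) ≤ (1:ℚ)/(p:ℚ)^(n+1) := by
        apply div_le_div_of_nonneg_left one_pos.le (by positivity)
        exact pow_le_pow_right₀ (le_of_lt hp1') (by omega)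
      linarith
    · rw [hqv]
      have : (0:ℚ) < (1:ℚ)/(p:ℚ)^(i+1) := by positivity
      linarith
  rw [hA, hB, sub_zero]
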